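/- arXiv:1303.3555 — 2 statements merged into one kernel-verified Lean document; each statement's English description precedes it below -/
import Mathlib

section
/- For any nonzero vector x in ℝ^{n-1} and any real Q ≥ 1, there exist a positive integer q and an integer vector p in ℤ^{n-1} such that |qx - p| ≤ Q^{-1} (in the supremum norm) and 1 ≤ q ≤ Q^{n-1}. -/
open MeasureTheory Submodule

section
variable {d : ℕ} (x : Fin d → ℝ)

noncomputable def shear : (Fin (d+1) → ℝ) →ₗ[ℝ] (Fin (d+1) → ℝ) where
  toFun z := Fin.cons (z 0) (fun i => z i.succ - z 0 * x i)
  map_add' y z := by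
    funext j
    refine Fin.cases ?_ (fun k => ?_) j <;> simp [Fin.cons_zero, Fin.cons_succ] <;> ring
  map_smul' c z := by
    funext j
    refine Fin.cases ?_ (fun k => ?_) j <;> simp [Fin.cons_zero, Fin.cons_succ] <;> ring

lemma shear_det : LinearMap.det (shear x) = 1 := by
  rw [← LinearMap.det_toMatrix (Pi.basisFun ℝ (Fin (d+1)))]
  set M := LinearMap.toMatrix (Pi.basisFun ℝ (Fin (d+1))) (Pi.basisFun ℝ (Fin (d+1))) (shear x) with hM
  have hMe : ∀ i j, M i j = shear x ((Pi.basisFun ℝ (Fin (d+1))) j) i := by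
    intro i j
    simp [hM, LinearMap.toMatrix_apply]
  have htri : M.BlockTriangular ⇑OrderDual.toDual := by
    intro i j h
    have h' : i < j := OrderDual.toDual_lt_toDual.mp h
    rw [hMe]
    obtain ⟨l, rfl⟩ := Fin.eq_succ_of_ne_zero (show j ≠ 0 from fun hj => by simp [hj] at h')
    rcases Fin.eq_zero_or_eq_succ i with rfl | ⟨k, rfl⟩
    · simp [shear, Fin.cons_zero, Pi.basisFun_apply, Pi.single_apply, (Fin.succ_ne_zero l).symm]
    · have hkl : k ≠ l := by
        rintro rfl
        exact lt_irrefl _ h'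
      simp [shear, Fin.cons_succ, Pi.basisFun_apply, Pi.single_apply,
        hkl, Fin.succ_ne_zero]
  rw [Matrix.det_of_lowerTriangular M htri]
  apply Finset.prod_eq_one
  intro i _
  rw [hMe]
  refine Fin.cases ?_ (fun k => ?_) i <;>
    simp [shear, Fin.cons_zero, Fin.cons_succ, Pi.basisFun_apply, Pi.single_apply, Fin.succ_ne_zero]

lemma minkowski_step (Q : ℝ) (hQ : 1 < Q) :
    ∃ c : Fin (d+1) → ℤ, (¬ ∀ j, c j = 0) ∧ |(c 0 : ℝ)| ≤ Q ^ d ∧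
      ∀ i : Fin d, |(c 0 : ℝ) * x i + (c i.succ : ℝ)| ≤ Q⁻¹ := by
  have hQ0 : (0:ℝ) < Q := lt_trans one_pos hQ
  set r : Fin (d+1) → ℝ := Fin.cons (Q ^ d) (fun _ => Q⁻¹) with hr
  set box : Set (Fin (d+1) → ℝ) := Set.univ.pi fun j => Set.Icc (-(r j)) (r j) with hbox
  have hr0 : ∀ j, 0 ≤ r j := by
    intro j
    refine Fin.cases ?_ (fun k => ?_) j <;> simp [hr] <;> positivity
  set s : Set (Fin (d+1) → ℝ) := shear x '' box with hs
  have hsymm : ∀ y ∈ s, -y ∈ s := by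
    rintro _ ⟨z, hz, rfl⟩
    refine ⟨-z, ?_, by simp⟩
    intro j _
    have := hz j (Set.mem_univ j)
    simp only [Set.mem_Icc, Pi.neg_apply] at this ⊢
    constructor <;> linarith [this.1, this.2]
  have hconv : Convex ℝ s := (convex_pi fun j _ => convex_Icc _ _).linear_image (shear x)
  have hcpt : IsCompact s :=
    ((isCompact_univ_pi fun j => isCompact_Icc).image (shear x).continuous_of_finiteDimensional)
  have hvolbox : volume box = ENNReal.ofReal (2 * Q ^ d) * ENNReal.ofReal (2 * Q⁻¹) ^ d := by
    rw [hbox, volume_pi_pi]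
    simp_rw [Real.volume_Icc]
    rw [Fin.prod_univ_succ]
    simp [hr, two_mul]
  have hvols : volume s = ENNReal.ofReal (2 * Q ^ d) * ENNReal.ofReal (2 * Q⁻¹) ^ d := by
    rw [hs, Measure.addHaar_image_linearMap, shear_det, ← hvolbox]
    simp
  have hfund := ZSpan.isAddFundamentalDomain' (Pi.basisFun ℝ (Fin (d+1))) volume
  have hvolF : volume (ZSpan.fundamentalDomain (Pi.basisFun ℝ (Fin (d+1)))) = 1 := by
    rw [ZSpan.volume_fundamentalDomain]
    have : Matrix.of ⇑(Pi.basisFun ℝ (Fin (d+1))) = 1 := by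
      ext i j
      simp [Pi.basisFun_apply, Matrix.one_apply, Pi.single_apply, eq_comm]
    rw [this]
    simp
  have hineq : volume (ZSpan.fundamentalDomain (Pi.basisFun ℝ (Fin (d+1)))) *
      2 ^ Module.finrank ℝ (Fin (d+1) → ℝ) ≤ volume s := by
    rw [hvolF, hvols, one_mul]
    apply le_of_eq
    rw [← ENNReal.ofReal_pow (by positivity), ← ENNReal.ofReal_mul (by positivity)]
    have : (2 * Q ^ d) * (2 * Q⁻¹) ^ d = 2 ^ (d + 1) := by
      rw [mul_pow, inv_pow]
      field_simp
      ring
    rw [this, ENNReal.ofReal_pow (by norm_num : (0:ℝ) ≤ 2)]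
    simp [Module.finrank_fintype_fun_eq_card]
  have : Countable (span ℤ (Set.range ⇑(Pi.basisFun ℝ (Fin (d+1))))).toAddSubgroup :=
    inferInstanceAs (Countable (span ℤ (Set.range ⇑(Pi.basisFun ℝ (Fin (d+1))))))
  obtain ⟨v, hv0, hvs⟩ := exists_ne_zero_mem_lattice_of_measure_mul_two_pow_le_measure
    hfund hsymm hconv hcpt hineq
  have hvm : (v : Fin (d+1) → ℝ) ∈ span ℤ (Set.range (Pi.basisFun ℝ (Fin (d+1)))) := v.2
  rw [mem_span_range_iff_exists_fun] at hvm
  obtain ⟨c, hc⟩ := hvm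
  have hcj : ∀ j, (v : Fin (d+1) → ℝ) j = (c j : ℝ) := by
    intro j
    rw [← hc]
    simp [Finset.sum_apply, Pi.basisFun_apply, Pi.single_apply]
  obtain ⟨z, hz, hgz⟩ := hvs
  refine ⟨c, ?_, ?_, ?_⟩
  · intro hall
    apply hv0
    ext j
    rw [hcj j, hall j]
    simp
  · have h0 : (v : Fin (d+1) → ℝ) 0 = z 0 := by rw [← hgz]; simp [shear]
    have := hz 0 (Set.mem_univ 0)
    rw [← hcj 0, h0]
    rw [abs_le]
    simpa [hr] using this
  · intro i
    have hsucc : (v : Fin (d+1) → ℝ) i.succ = z i.succ - z 0 * x i := by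
      rw [← hgz]; simp [shear]
    have h0 : (v : Fin (d+1) → ℝ) 0 = z 0 := by rw [← hgz]; simp [shear]
    have hzi := hz i.succ (Set.mem_univ i.succ)
    have : (c 0 : ℝ) * x i + (c i.succ : ℝ) = z i.succ := by
      rw [← hcj 0, ← hcj i.succ, h0, hsucc]; ring
    rw [this, abs_le]
    simpa [hr] using hzi
end

lemma dirichlet_aux (d : ℕ) (x : Fin d → ℝ) (Q : ℝ) (hQ : 1 ≤ Q) :
    ∃ (q : ℕ) (p : Fin d → ℤ), 1 ≤ q ∧ (q : ℝ) ≤ Q ^ d ∧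
      ∀ i, |(q : ℝ) * x i - (p i : ℝ)| ≤ Q⁻¹ := by
  have hQ0 : (0:ℝ) < Q := lt_of_lt_of_le one_pos hQ
  rcases le_or_gt Q 2 with hQ2 | hQ2
  · refine ⟨1, fun i => round (x i), le_refl 1, by simpa using one_le_pow₀ hQ, fun i => ?_⟩
    have h1 : |x i - round (x i)| ≤ 1/2 := abs_sub_round (x i)
    have h2 : (1:ℝ)/2 ≤ Q⁻¹ := by
      rw [one_div]; exact inv_anti₀ hQ0 hQ2
    simpa using h1.trans h2
  · have hQ1 : (1:ℝ) < Q := by linarith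
    obtain ⟨c, hc0, hcb, hci⟩ := minkowski_step x Q hQ1
    have hc00 : c 0 ≠ 0 := by
      intro h0
      apply hc0
      intro j
      rcases Fin.eq_zero_or_eq_succ j with rfl | ⟨k, rfl⟩
      · exact h0
      · have := hci k
        rw [h0] at this
        simp only [Int.cast_zero, zero_mul, zero_add] at this
        have hlt : |(c k.succ : ℝ)| < 1 := lt_of_le_of_lt this (by
          rw [inv_lt_one_iff₀]; right; linarith)
        rw [← Int.cast_abs] at hlt
        have h2 : |c k.succ| < 1 := by exact_mod_cast hlt
        rcases abs_lt.mp h2 with ⟨h3, h4⟩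
        omega
    refine ⟨(c 0).natAbs, fun i => if 0 ≤ c 0 then -(c i.succ) else c i.succ,
      Int.natAbs_pos.mpr hc00, ?_, ?_⟩
    · rw [Nat.cast_natAbs]
      push_cast
      exact hcb
    · intro i
      rcases le_or_gt 0 (c 0) with h | h
      · have hq : ((c 0).natAbs : ℝ) = (c 0 : ℝ) := by
          rw [Nat.cast_natAbs, abs_of_nonneg h]
        simp only [if_pos h]
        rw [hq]
        simpa [sub_neg_eq_add] using hci i
      · have hq : ((c 0).natAbs : ℝ) = -(c 0 : ℝ) := by
          rw [Nat.cast_natAbs, abs_of_neg h]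
          push_cast
          ring
        simp only [if_neg (not_le.mpr h)]
        rw [hq]
        have h3 := hci i
        rw [show -(c 0 : ℝ) * x i - (c i.succ : ℝ) = -((c 0 : ℝ) * x i + (c i.succ : ℝ)) by ring,
          abs_neg]
        exact h3

/-- **Dirichlet's simultaneous approximation theorem.** For any nonzero
`x ∈ ℝ^{n-1}` and real `Q ≥ 1`, there exist `q ∈ ℕ`, `1 ≤ q ≤ Q^{n-1}`, and
`p ∈ ℤ^{n-1}` with `|q x - p| ≤ Q⁻¹` in the supremum norm. -/
theorem dirichlet_box (n : ℕ) (hn : 2 ≤ n) (x : Fin (n - 1) → ℝ) (hx : x ≠ 0)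
    (Q : ℝ) (hQ : 1 ≤ Q) :
    ∃ (q : ℕ) (p : Fin (n - 1) → ℤ), 1 ≤ q ∧ (q : ℝ) ≤ Q ^ (n - 1) ∧
      ‖(fun i => (q : ℝ) * x i - (p i : ℝ))‖ ≤ Q⁻¹ := by
  obtain ⟨q, p, h1, h2, h3⟩ := dirichlet_aux (n - 1) x Q hQ
  refine ⟨q, p, h1, h2, ?_⟩
  rw [pi_norm_le_iff_of_nonneg (by positivity)]
  intro i
  simpa [Real.norm_eq_abs] using h3 i
end

section
/- Let τ ≥ 0 and let x ∈ [-1,1]^{n-1} satisfy: there exists γ > 0 such that for all nonzero k ∈ ℤ^{n-1}, the distance from k·x to ℤ is at least γ|k|^{-(1+τ)(n-1)}. Then there exists γ̄ > 0 such that for every positive integer q, the distance from qx to the lattice ℤ^{n-1} (in supremum norm) is at least γ̄ q^{-(1+(n-1)τ)/(n-1)}. -/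
/-- **Khintchine transference (particular case).** If `x ∈ [-1,1]^{n-1}` is
Diophantine in the linear sense (`‖k·x‖_ℤ ≥ γ |k|^{-(1+τ)(n-1)}` for all
nonzero integer vectors `k`), then it is Diophantine in the simultaneous
sense: there is `γ̄ > 0` with `‖q x‖_{ℤ^{n-1}} ≥ γ̄ q^{-(1+(n-1)τ)/(n-1)}`
for all positive integers `q`. -/
theorem khintchine_transference (n : ℕ) (hn : 2 ≤ n) (τ : ℝ) (hτ : 0 ≤ τ)
    (x : Fin (n - 1) → ℝ) (hx : ∀ i, x i ∈ Set.Icc (-1 : ℝ) 1)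
    (hdioph : ∃ γ : ℝ, 0 < γ ∧ ∀ k : Fin (n - 1) → ℤ, k ≠ 0 → ∀ m : ℤ,
      γ * ‖(fun i => (k i : ℝ))‖ ^ (-(1 + τ) * ((n : ℝ) - 1)) ≤
        |(∑ i, (k i : ℝ) * x i) - (m : ℝ)|) :
    ∃ γb : ℝ, 0 < γb ∧ ∀ q : ℕ, 1 ≤ q → ∀ p : Fin (n - 1) → ℤ,
      γb * (q : ℝ) ^ (-(1 + ((n : ℝ) - 1) * τ) / ((n : ℝ) - 1)) ≤
        ‖(fun i => (q : ℝ) * x i - (p i : ℝ))‖ := by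
  obtain ⟨γ, hγ, hd⟩ := hdioph
  set c : ℝ := (n : ℝ) - 1 with hc_def
  have hc1 : (1 : ℝ) ≤ c := by
    have : (2 : ℝ) ≤ (n : ℝ) := by exact_mod_cast hn
    simp only [hc_def]; linarith
  have hc0 : (0 : ℝ) < c := lt_of_lt_of_le one_pos hc1
  have hcnm : ((n - 1 : ℕ) : ℝ) = c := by
    have : (1 : ℕ) ≤ n := le_trans one_le_two hn
    push_cast [Nat.cast_sub this]; ring
  set E : ℝ := (1 + τ) * c + 1 with hE_def
  have hE0 : 0 < E := by
    have : 0 < (1 + τ) * c := mul_pos (by linarith) hc0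
    simp only [hE_def]; linarith
  refine ⟨γ * (2 : ℝ) ^ (-E) / c, by positivity, ?_⟩
  intro q hq p
  have hq0 : (0 : ℝ) < (q : ℝ) := by exact_mod_cast Nat.lt_of_lt_of_le Nat.zero_lt_one hq
  have hq1 : (1 : ℝ) ≤ (q : ℝ) := by exact_mod_cast hq
  -- the sup norm δ of the vector q x - p
  set v : Fin (n - 1) → ℝ := fun i => (q : ℝ) * x i - (p i : ℝ) with hv_def
  set δ : ℝ := ‖v‖ with hδ_def
  have hδ0 : 0 ≤ δ := norm_nonneg _
  have hvle : ∀ i, |v i| ≤ δ := by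
    intro i
    have := norm_le_pi_norm v i
    simpa using this
  -- choose K
  set t : ℝ := (q : ℝ) ^ ((1 : ℝ) / c) with ht_def
  have ht1 : (1 : ℝ) ≤ t := Real.one_le_rpow hq1 (by positivity)
  have ht0 : (0 : ℝ) < t := lt_of_lt_of_le one_pos ht1
  set K : ℕ := ⌈t⌉₊ with hK_def
  have hKt : t ≤ (K : ℝ) := Nat.le_ceil t
  have hK1 : 1 ≤ K := by
    have : (0 : ℝ) < (K : ℝ) := lt_of_lt_of_le ht0 hKt
    exact_mod_cast Nat.succ_le_of_lt (by exact_mod_cast this)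
  have hK0 : (0 : ℝ) < (K : ℝ) := by exact_mod_cast hK1
  have hK2t : (K : ℝ) ≤ 2 * t := by
    have h1 : (K : ℝ) < t + 1 := Nat.ceil_lt_add_one (le_of_lt ht0)
    linarith
  -- q ≤ K ^ (n-1)
  have htpow : t ^ (n - 1 : ℕ) = (q : ℝ) := by
    rw [ht_def, ← Real.rpow_natCast ((q : ℝ) ^ ((1:ℝ)/c)) (n-1), ← Real.rpow_mul (le_of_lt hq0)]
    rw [hcnm]
    rw [one_div_mul_cancel (ne_of_gt hc0), Real.rpow_one]
  have hqK : q ≤ K ^ (n - 1 : ℕ) := by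
    have h1 : (q : ℝ) ≤ (K : ℝ) ^ (n - 1 : ℕ) := by
      rw [← htpow]
      exact pow_le_pow_left₀ (le_of_lt ht0) hKt _
    exact_mod_cast h1
  have hqK' : q < (K + 1) ^ (n - 1 : ℕ) := by
    have hm : n - 1 ≠ 0 := by omega
    calc q ≤ K ^ (n - 1 : ℕ) := hqK
      _ < (K + 1) ^ (n - 1 : ℕ) := Nat.pow_lt_pow_left (Nat.lt_succ_self K) hm
  -- pigeonhole
  haveI : NeZero q := ⟨by omega⟩
  obtain ⟨a, b, hab, hg⟩ :=
    Fintype.exists_ne_map_eq_of_card_lt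
      (fun k : Fin (n - 1) → Fin (K + 1) => ∑ i, (k i : ZMod q) * (p i : ZMod q))
      (by simpa [ZMod.card] using hqK')
  set k : Fin (n - 1) → ℤ := fun i => ((a i : ℕ) : ℤ) - ((b i : ℕ) : ℤ) with hk_def
  have hk0 : k ≠ 0 := by
    intro h
    apply hab
    funext i
    have : k i = 0 := by rw [h]; rfl
    have : ((a i : ℕ) : ℤ) = ((b i : ℕ) : ℤ) := by simp only [hk_def] at this; omega
    have : (a i : ℕ) = (b i : ℕ) := by exact_mod_cast this
    exact Fin.ext this
  have hkK : ∀ i, |k i| ≤ (K : ℤ) := by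
    intro i
    have ha := Fin.is_le (a i)
    have hb := Fin.is_le (b i)
    simp only [hk_def]
    rw [abs_le]
    constructor <;> omega
  have hdiv : (q : ℤ) ∣ ∑ i, k i * p i := by
    have h0 : ((∑ i, k i * p i : ℤ) : ZMod q) = 0 := by
      simp only [hk_def]
      push_cast
      rw [show (∑ i, (((a i : ℕ) : ZMod q) - ((b i : ℕ) : ZMod q)) * (p i : ZMod q))
        = (∑ i, ((a i : ℕ) : ZMod q) * (p i : ZMod q))
          - ∑ i, ((b i : ℕ) : ZMod q) * (p i : ZMod q) by
          rw [← Finset.sum_sub_distrib]; congr 1; funext i; ring]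
      rw [hg]
      ring
    exact (ZMod.intCast_zmod_eq_zero_iff_dvd _ _).mp h0
  set m0 : ℤ := (∑ i, k i * p i) / q with hm0_def
  have hm0 : (q : ℤ) * m0 = ∑ i, k i * p i := Int.mul_ediv_cancel' hdiv
  -- key identity
  have key : (q : ℝ) * ((∑ i, (k i : ℝ) * x i) - (m0 : ℝ)) = ∑ i, (k i : ℝ) * v i := by
    have h := congrArg (fun z : ℤ => (z : ℝ)) hm0
    push_cast at h
    simp only [hv_def]
    rw [mul_sub, Finset.mul_sum, h, ← Finset.sum_sub_distrib]
    exact Finset.sum_congr rfl fun i _ => by ring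
  -- bound the linear form
  have hsum : |∑ i, (k i : ℝ) * v i| ≤ c * (K : ℝ) * δ := by
    calc |∑ i, (k i : ℝ) * v i| ≤ ∑ i, |(k i : ℝ) * v i| := Finset.abs_sum_le_sum_abs _ _
      _ ≤ ∑ _i : Fin (n - 1), (K : ℝ) * δ := by
          apply Finset.sum_le_sum
          intro i _
          rw [abs_mul]
          have h1 : |(k i : ℝ)| ≤ (K : ℝ) := by
            have := hkK i
            have : |(k i : ℝ)| = ((|k i| : ℤ) : ℝ) := by push_cast; ring
            rw [this]; exact_mod_cast hkK i
          exact mul_le_mul h1 (hvle i) (abs_nonneg _) (le_of_lt hK0)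
      _ = c * (K : ℝ) * δ := by
          rw [Finset.sum_const, Finset.card_univ, Fintype.card_fin, nsmul_eq_mul, hcnm]; ring
  -- apply the Diophantine hypothesis
  have hdk := hd k hk0 m0
  have hknorm1 : (1 : ℝ) ≤ ‖(fun i => (k i : ℝ))‖ := by
    obtain ⟨i, hi⟩ : ∃ i, k i ≠ 0 := by
      by_contra h
      push_neg at h
      exact hk0 (funext h)
    have h1 : (1 : ℝ) ≤ |(k i : ℝ)| := by
      have : (1 : ℤ) ≤ |k i| := Int.one_le_abs hi
      have h2 : ((1 : ℤ) : ℝ) ≤ ((|k i| : ℤ) : ℝ) := by exact_mod_cast this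
      push_cast at h2
      simpa using h2
    calc (1 : ℝ) ≤ |(k i : ℝ)| := h1
      _ ≤ ‖(fun i => (k i : ℝ))‖ := by
          simpa [Real.norm_eq_abs] using norm_le_pi_norm (fun i => (k i : ℝ)) i
  have hknormK : ‖(fun i => (k i : ℝ))‖ ≤ (K : ℝ) := by
    apply pi_norm_le_iff_of_nonneg (le_of_lt hK0) |>.mpr
    intro i
    rw [Real.norm_eq_abs]
    have : |(k i : ℝ)| = ((|k i| : ℤ) : ℝ) := by push_cast; ring
    rw [this]; exact_mod_cast hkK i
  have hexp_neg : -(1 + τ) * c ≤ 0 := by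
    have : 0 ≤ (1 + τ) * c := mul_nonneg (by linarith) (le_of_lt hc0)
    linarith
  have hKpow_le : (K : ℝ) ^ (-(1 + τ) * c) ≤ ‖(fun i => (k i : ℝ))‖ ^ (-(1 + τ) * c) :=
    Real.rpow_le_rpow_of_nonpos (lt_of_lt_of_le one_pos hknorm1) hknormK hexp_neg
  -- main chain: γ * K^(-(1+τ)c) * q ≤ c * K * δ
  have hmain : γ * (K : ℝ) ^ (-(1 + τ) * c) * (q : ℝ) ≤ c * (K : ℝ) * δ := by
    have h1 : γ * (K : ℝ) ^ (-(1 + τ) * c) ≤ |(∑ i, (k i : ℝ) * x i) - (m0 : ℝ)| :=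
      le_trans (mul_le_mul_of_nonneg_left hKpow_le (le_of_lt hγ)) hdk
    have h2 : |(∑ i, (k i : ℝ) * x i) - (m0 : ℝ)| * (q : ℝ) ≤ c * (K : ℝ) * δ := by
      have : |(∑ i, (k i : ℝ) * x i) - (m0 : ℝ)| * (q : ℝ) = |∑ i, (k i : ℝ) * v i| := by
        rw [← key, abs_mul, abs_of_pos hq0]; ring
      rw [this]; exact hsum
    calc γ * (K : ℝ) ^ (-(1 + τ) * c) * (q : ℝ)
        ≤ |(∑ i, (k i : ℝ) * x i) - (m0 : ℝ)| * (q : ℝ) :=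
          mul_le_mul_of_nonneg_right h1 (le_of_lt hq0)
      _ ≤ c * (K : ℝ) * δ := h2
  -- now the rpow bookkeeping: show γb * q^e * (c*K) ≤ γ * K^(-(1+τ)c) * q
  have hKE : (K : ℝ) ^ E ≤ (2 : ℝ) ^ E * t ^ E := by
    calc (K : ℝ) ^ E ≤ (2 * t) ^ E :=
          Real.rpow_le_rpow (le_of_lt hK0) hK2t (le_of_lt hE0)
      _ = (2 : ℝ) ^ E * t ^ E := Real.mul_rpow (by norm_num) (le_of_lt ht0)
  have htE : t ^ E = (q : ℝ) ^ (E / c) := by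
    rw [ht_def, ← Real.rpow_mul (le_of_lt hq0)]
    congr 1
    field_simp
  set e : ℝ := -(1 + c * τ) / c with he_def
  have heEc : e + E / c = 1 := by
    simp only [he_def, hE_def]
    field_simp
    ring
  have hstep : (2 : ℝ) ^ (-E) * (q : ℝ) ^ e * (K : ℝ) ^ E ≤ (q : ℝ) := by
    calc (2 : ℝ) ^ (-E) * (q : ℝ) ^ e * (K : ℝ) ^ E
        ≤ (2 : ℝ) ^ (-E) * (q : ℝ) ^ e * ((2 : ℝ) ^ E * t ^ E) := by
          apply mul_le_mul_of_nonneg_left hKE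
          positivity
      _ = ((2 : ℝ) ^ (-E) * (2 : ℝ) ^ E) * ((q : ℝ) ^ e * (q : ℝ) ^ (E / c)) := by
          rw [htE]; ring
      _ = (q : ℝ) ^ (e + E / c) := by
          rw [← Real.rpow_add (by norm_num : (0:ℝ) < 2), ← Real.rpow_add hq0]
          simp
      _ = (q : ℝ) := by rw [heEc, Real.rpow_one]
  -- convert hstep into the needed inequality by multiplying with γ/c * K^(-(1+τ)c-... )
  have hKEsplit : (K : ℝ) ^ E = (K : ℝ) ^ ((1 + τ) * c) * (K : ℝ) := by
    rw [hE_def, Real.rpow_add hK0, Real.rpow_one]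
  have hKinv : (K : ℝ) ^ (-(1 + τ) * c) * (K : ℝ) ^ ((1 + τ) * c) = 1 := by
    rw [← Real.rpow_add hK0, show -(1 + τ) * c + (1 + τ) * c = 0 by ring, Real.rpow_zero]
  have hfinal : γ * (2 : ℝ) ^ (-E) / c * (q : ℝ) ^ e * (c * (K : ℝ))
      ≤ γ * (K : ℝ) ^ (-(1 + τ) * c) * (q : ℝ) := by
    have h1 : (2 : ℝ) ^ (-E) * (q : ℝ) ^ e * (K : ℝ)
        ≤ (q : ℝ) * (K : ℝ) ^ (-(1 + τ) * c) := by
      have h2 := mul_le_mul_of_nonneg_right hstep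
        (le_of_lt (Real.rpow_pos_of_pos hK0 (-(1 + τ) * c)))
      calc (2 : ℝ) ^ (-E) * (q : ℝ) ^ e * (K : ℝ)
          = (2 : ℝ) ^ (-E) * (q : ℝ) ^ e * (K : ℝ) ^ E * (K : ℝ) ^ (-(1 + τ) * c) := by
            rw [hKEsplit]
            rw [show (2:ℝ)^(-E) * (q:ℝ)^e * ((K:ℝ)^((1+τ)*c) * (K:ℝ)) * (K:ℝ)^(-(1+τ)*c)
              = (2:ℝ)^(-E) * (q:ℝ)^e * (K:ℝ) * ((K:ℝ)^(-(1+τ)*c) * (K:ℝ)^((1+τ)*c)) by ring]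
            rw [hKinv]; ring
        _ ≤ (q : ℝ) * (K : ℝ) ^ (-(1 + τ) * c) := h2
    calc γ * (2 : ℝ) ^ (-E) / c * (q : ℝ) ^ e * (c * (K : ℝ))
        = γ * ((2 : ℝ) ^ (-E) * (q : ℝ) ^ e * (K : ℝ)) := by
          field_simp
      _ ≤ γ * ((q : ℝ) * (K : ℝ) ^ (-(1 + τ) * c)) :=
          mul_le_mul_of_nonneg_left h1 (le_of_lt hγ)
      _ = γ * (K : ℝ) ^ (-(1 + τ) * c) * (q : ℝ) := by ring
  -- finish
  have hcK : (0 : ℝ) < c * (K : ℝ) := mul_pos hc0 hK0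
  have : γ * (2 : ℝ) ^ (-E) / c * (q : ℝ) ^ e * (c * (K : ℝ)) ≤ c * (K : ℝ) * δ :=
    le_trans hfinal hmain
  have h3 : γ * (2 : ℝ) ^ (-E) / c * (q : ℝ) ^ e * (c * (K : ℝ)) ≤ δ * (c * (K : ℝ)) := by
    linarith
  exact le_of_mul_le_mul_right h3 hcK
end
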